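/- Let 0 < p_0 < p_1 ≤ ∞ and 0 < q_0 < q_1 ≤ ∞. Then the n-th Bernstein number of the inclusion map ℓ^{q_0}(ℓ^{p_0}) ↪ ℓ^{q_1}(ℓ^{p_1}) satisfies b_n ≤ n^{-min(1/p_0, 1/q_0)(1 - max(q_0/q_1, p_0/p_1))}. In particular, the inclusion is finitely strictly singular. -/

import Mathlib

open MeasureTheory Set ENNReal Filter

/-- The `ℓ^p` norm of a family of extended nonnegative reals (with `p = ∞` giving the sup). -/
noncomputable def elpE {ι : Type*} (p : ℝ≥0∞) (x : ι → ℝ≥0∞) : ℝ≥0∞ :=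
  if p = ∞ then ⨆ k, x k else (∑' k, x k ^ p.toReal) ^ (1 / p.toReal)

/-- The `ℓ^p` (quasi-)norm of a real-valued family. -/
noncomputable def elp {ι : Type*} (p : ℝ≥0∞) (x : ι → ℝ) : ℝ≥0∞ :=
  elpE p fun k => (‖x k‖₊ : ℝ≥0∞)

/-- The mixed norm of `ℓ^q(ℓ^p)` on double sequences (inner exponent `p`, outer `q`). -/
noncomputable def elp2 (p q : ℝ≥0∞) (x : ℕ → ℕ → ℝ) : ℝ≥0∞ :=
  elpE q fun j => elp p (x j)

/-- The `n`-th Bernstein number of the identity viewed as a map from the space with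
(quasi-)norm `N` to the space with (quasi-)norm `M`: the supremum over `n`-dimensional
subspaces (consisting of elements of finite `N`-norm) of the infimum of `M x` over
`N`-unit vectors `x` in the subspace. -/
noncomputable def bern {E : Type*} [AddCommGroup E] [Module ℝ E]
    (N M : E → ℝ≥0∞) (n : ℕ) : ℝ≥0∞ :=
  ⨆ V : {V : Submodule ℝ E // Module.finrank ℝ V = n ∧ ∀ x ∈ V, N x ≠ ∞},
    ⨅ x : {x : E // x ∈ V.1 ∧ N x = 1}, M x.1

section A
variable {ι : Type*} {x : ι → ℝ≥0∞} {T : ℝ≥0∞}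

-- A1
lemma le_rpow_tsum {c : ℝ} (hc : 0 < c) (x : ι → ℝ≥0∞) (k : ι) :
    x k ≤ (∑' i, x i ^ c) ^ (1 / c) := by
  have h1 : x k = ((x k ^ c) ^ (1/c)) := by
    rw [← ENNReal.rpow_mul, mul_one_div_cancel hc.ne', ENNReal.rpow_one]
  rw [h1]
  exact ENNReal.rpow_le_rpow (ENNReal.le_tsum k) (by positivity)

-- A2a
lemma rpow_tsum_mono {c d : ℝ} (hc : 0 < c) (hcd : c ≤ d) (x : ι → ℝ≥0∞) :
    (∑' i, x i ^ d) ^ (1 / d) ≤ (∑' i, x i ^ c) ^ (1 / c) := by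
  set S := (∑' i, x i ^ c) ^ (1 / c) with hS
  by_cases hStop : S = ∞
  · rw [hStop]; exact le_top
  have hd : 0 < d := lt_of_lt_of_le hc hcd
  have hsum : ∑' i, x i ^ d ≤ S ^ (d - c) * ∑' i, x i ^ c := by
    rw [← ENNReal.tsum_mul_left]
    refine ENNReal.tsum_le_tsum fun i => ?_
    have : x i ^ d = x i ^ (d - c) * x i ^ c := by
      rw [← ENNReal.rpow_add_of_nonneg _ _ (by linarith) hc.le, sub_add_cancel]
    rw [this]
    exact mul_le_mul_left (ENNReal.rpow_le_rpow (le_rpow_tsum hc x i) (by linarith)) _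
  have hSc : ∑' i, x i ^ c = S ^ c := by
    rw [hS, ← ENNReal.rpow_mul, one_div_mul_cancel hc.ne', ENNReal.rpow_one]
  calc (∑' i, x i ^ d) ^ (1/d) ≤ (S ^ (d - c) * S ^ c) ^ (1/d) := by
        exact ENNReal.rpow_le_rpow (by rw [← hSc]; exact hsum) (by positivity)
    _ = (S ^ d) ^ (1/d) := by
        rw [← ENNReal.rpow_add_of_nonneg _ _ (by linarith) hc.le, sub_add_cancel]
    _ = S := by rw [← ENNReal.rpow_mul, mul_one_div_cancel hd.ne', ENNReal.rpow_one]

-- A2b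
lemma rpow_tsum_interp {c θ : ℝ} (hc : 0 < c) (hθ : 0 < θ) (hθ1 : θ ≤ 1)
    (hT : ∀ k, x k ≤ T) :
    (∑' i, x i ^ (c / θ)) ^ (θ / c) ≤ T ^ (1 - θ) * (∑' i, x i ^ c) ^ (θ / c) := by
  have h1 : ∑' i, x i ^ (c / θ) ≤ T ^ (c / θ - c) * ∑' i, x i ^ c := by
    rw [← ENNReal.tsum_mul_left]
    refine ENNReal.tsum_le_tsum fun i => ?_
    have hcc : c ≤ c / θ := (le_div_iff₀ hθ).2 (by nlinarith)
    have : x i ^ (c/θ) = x i ^ (c/θ - c) * x i ^ c := by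
      rw [← ENNReal.rpow_add_of_nonneg _ _ (by linarith) hc.le, sub_add_cancel]
    rw [this]
    exact mul_le_mul_left (ENNReal.rpow_le_rpow (hT i) (by linarith)) _
  calc (∑' i, x i ^ (c/θ)) ^ (θ/c)
      ≤ (T ^ (c/θ - c) * ∑' i, x i ^ c) ^ (θ/c) :=
        ENNReal.rpow_le_rpow h1 (by positivity)
    _ = (T ^ (c/θ - c)) ^ (θ/c) * (∑' i, x i ^ c) ^ (θ/c) :=
        ENNReal.mul_rpow_of_nonneg _ _ (by positivity)
    _ = T ^ (1 - θ) * (∑' i, x i ^ c) ^ (θ/c) := by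
        rw [← ENNReal.rpow_mul, show (c/θ - c) * (θ/c) = 1 - θ by field_simp]

-- A2
lemma rpow_tsum_interp' {c d θ : ℝ} (hc : 0 < c) (hθ : 0 < θ) (hθ1 : θ ≤ 1)
    (hd : c / θ ≤ d) (hT : ∀ k, x k ≤ T) :
    (∑' i, x i ^ d) ^ (1 / d) ≤ T ^ (1 - θ) * (∑' i, x i ^ c) ^ (θ / c) := by
  have hcθ : 0 < c / θ := by positivity
  calc (∑' i, x i ^ d) ^ (1/d) ≤ (∑' i, x i ^ (c/θ)) ^ (1/(c/θ)) :=
        rpow_tsum_mono hcθ hd x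
    _ = (∑' i, x i ^ (c/θ)) ^ (θ/c) := by rw [one_div_div]
    _ ≤ T ^ (1 - θ) * (∑' i, x i ^ c) ^ (θ/c) := rpow_tsum_interp hc hθ hθ1 hT

end A

section B
variable {ι : Type*} {x v : ι → ℝ≥0∞} {T : ℝ≥0∞}

lemma toReal_pos_of_lt_top {p : ℝ≥0∞} (hp : 0 < p) (hp' : p ≠ ∞) : 0 < p.toReal :=
  ENNReal.toReal_pos hp.ne' hp'

-- B3
lemma le_elpE {p : ℝ≥0∞} (hp : 0 < p) (x : ι → ℝ≥0∞) (k : ι) : x k ≤ elpE p x := by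
  unfold elpE
  split_ifs with h
  · exact le_iSup x k
  · exact le_rpow_tsum (toReal_pos_of_lt_top hp h) x k

-- B4
lemma elpE_mono {p : ℝ≥0∞} {x y : ι → ℝ≥0∞} (h : ∀ k, x k ≤ y k) :
    elpE p x ≤ elpE p y := by
  unfold elpE
  split_ifs with hp
  · exact iSup_mono h
  · exact ENNReal.rpow_le_rpow (ENNReal.tsum_le_tsum fun k =>
      ENNReal.rpow_le_rpow (h k) ENNReal.toReal_nonneg) (by positivity)

-- B5
lemma elpE_const_mul {p : ℝ≥0∞} (hp : 0 < p) (c : ℝ≥0∞) (x : ι → ℝ≥0∞) :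
    elpE p (fun k => c * x k) = c * elpE p x := by
  unfold elpE
  split_ifs with h
  · exact (ENNReal.mul_iSup c x).symm
  · have ht : 0 < p.toReal := toReal_pos_of_lt_top hp h
    calc (∑' k, (c * x k) ^ p.toReal) ^ (1/p.toReal)
        = (c ^ p.toReal * ∑' k, x k ^ p.toReal) ^ (1/p.toReal) := by
          rw [← ENNReal.tsum_mul_left]
          congr 1
          exact tsum_congr fun k => ENNReal.mul_rpow_of_nonneg _ _ ht.le
      _ = (c ^ p.toReal) ^ (1/p.toReal) * (∑' k, x k ^ p.toReal) ^ (1/p.toReal) :=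
          ENNReal.mul_rpow_of_nonneg _ _ (by positivity)
      _ = c * (∑' k, x k ^ p.toReal) ^ (1/p.toReal) := by
          rw [← ENNReal.rpow_mul, mul_one_div_cancel ht.ne', ENNReal.rpow_one]

-- B6 : inner interpolation
lemma elpE_interp {p₀ p₁ : ℝ≥0∞} {θ : ℝ} (hp₀ : 0 < p₀) (hp₀' : p₀ ≠ ∞)
    (hθ : 0 < θ) (hθ1 : θ ≤ 1)
    (hcond : p₁ = ∞ ∨ p₀.toReal ≤ θ * p₁.toReal)
    (hT : ∀ k, x k ≤ T) :
    elpE p₁ x ≤ T ^ (1 - θ) * (elpE p₀ x) ^ θ := by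
  have hc : 0 < p₀.toReal := toReal_pos_of_lt_top hp₀ hp₀'
  have hEx : (elpE p₀ x) ^ θ = (∑' k, x k ^ p₀.toReal) ^ (θ / p₀.toReal) := by
    rw [elpE, if_neg hp₀', ← ENNReal.rpow_mul, one_div, inv_mul_eq_div]
  rcases hcond with h | h
  · rw [h, elpE, if_pos rfl]
    refine iSup_le fun k => ?_
    have : x k = x k ^ (1 - θ) * x k ^ θ := by
      rw [← ENNReal.rpow_add_of_nonneg _ _ (by linarith) hθ.le, sub_add_cancel,
        ENNReal.rpow_one]
    rw [this]
    exact mul_le_mul' (ENNReal.rpow_le_rpow (hT k) (by linarith))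
      (ENNReal.rpow_le_rpow (le_elpE hp₀ x k) hθ.le)
  · have hp₁' : p₁ ≠ ∞ := by
      rintro rfl
      rw [ENNReal.toReal_top, mul_zero] at h
      exact absurd h (not_le.2 hc)
    have hd : p₀.toReal / θ ≤ p₁.toReal := (div_le_iff₀' hθ).2 h
    rw [elpE, if_neg hp₁', hEx]
    exact rpow_tsum_interp' hc hθ hθ1 hd hT

-- B7 : outer step
lemma elpE_rpow_le {q₀ q₁ : ℝ≥0∞} {θ : ℝ} (hq₀ : 0 < q₀) (hq₀' : q₀ ≠ ∞)
    (hθ : 0 < θ) (hθ1 : θ ≤ 1)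
    (hcond : q₁ = ∞ ∨ q₀.toReal ≤ θ * q₁.toReal) (v : ι → ℝ≥0∞) :
    elpE q₁ (fun j => v j ^ θ) ≤ (elpE q₀ v) ^ θ := by
  have hc : 0 < q₀.toReal := toReal_pos_of_lt_top hq₀ hq₀'
  rcases hcond with h | h
  · rw [h, elpE, if_pos rfl]
    exact iSup_le fun j => ENNReal.rpow_le_rpow (le_elpE hq₀ v j) hθ.le
  · have hq₁r : 0 < q₁.toReal := by nlinarith
    have hq₁' : q₁ ≠ ∞ := by
      rintro rfl; rw [ENNReal.toReal_top] at hq₁r; exact lt_irrefl 0 hq₁r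
    set d : ℝ := θ * q₁.toReal with hd
    have hdpos : 0 < d := by positivity
    rw [elpE, if_neg hq₁', elpE, if_neg hq₀']
    have h1 : ∀ j, (v j ^ θ) ^ q₁.toReal = v j ^ d := by
      intro j; rw [← ENNReal.rpow_mul]
    calc (∑' j, (v j ^ θ) ^ q₁.toReal) ^ (1 / q₁.toReal)
        = ((∑' j, v j ^ d) ^ (1/d)) ^ θ := by
          rw [tsum_congr h1, ← ENNReal.rpow_mul]
          congr 1
          field_simp
          rw [hd]; ring
      _ ≤ ((∑' j, v j ^ q₀.toReal) ^ (1/q₀.toReal)) ^ θ :=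
          ENNReal.rpow_le_rpow (rpow_tsum_mono hc h v) hθ.le

end B

section C

variable {p₀ p₁ q₀ q₁ : ℝ≥0∞}

-- ratio facts
lemma theta_nonneg (p₀ p₁ q₀ q₁ : ℝ≥0∞) :
    0 ≤ max (q₀.toReal / q₁.toReal) (p₀.toReal / p₁.toReal) :=
  le_max_of_le_left (by positivity)

lemma theta_le_one (hp₀ : 0 < p₀) (hp : p₀ < p₁) (hq₀ : 0 < q₀) (hq : q₀ < q₁) :
    max (q₀.toReal / q₁.toReal) (p₀.toReal / p₁.toReal) ≤ 1 := by
  have h1 : ∀ a b : ℝ≥0∞, a < b → a.toReal / b.toReal ≤ 1 := by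
    intro a b hab
    by_cases hb : b = ∞
    · simp [hb]
    · have := ENNReal.toReal_mono hb hab.le
      have hb0 : 0 ≤ b.toReal := ENNReal.toReal_nonneg
      rcases eq_or_lt_of_le hb0 with h | h
      · rw [← h]; simp
      · exact div_le_one_of_le₀ this hb0
  exact max_le (h1 _ _ hq) (h1 _ _ hp)

lemma theta_lt_one (hp₀ : 0 < p₀) (hp : p₀ < p₁) (hq₀ : 0 < q₀) (hq : q₀ < q₁) :
    max (q₀.toReal / q₁.toReal) (p₀.toReal / p₁.toReal) < 1 := by
  have h1 : ∀ a b : ℝ≥0∞, 0 < a → a < b → a.toReal / b.toReal < 1 := by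
    intro a b ha hab
    by_cases hb : b = ∞
    · simp [hb]
    · have hbr : 0 < b.toReal := toReal_pos_of_lt_top (ha.trans hab) hb
      have : a.toReal < b.toReal :=
        (ENNReal.toReal_lt_toReal (ne_top_of_lt hab) hb).2 hab
      exact (div_lt_one hbr).2 this
  exact max_lt (h1 _ _ hq₀ hq) (h1 _ _ hp₀ hp)

-- B8 master upper estimate
lemma elp2_le_interp (hp₀ : 0 < p₀) (hp : p₀ < p₁) (hq₀ : 0 < q₀) (hq : q₀ < q₁)
    {z : ℕ → ℕ → ℝ} {T : ℝ≥0∞} (hT : ∀ j k, (‖z j k‖₊ : ℝ≥0∞) ≤ T) :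
    elp2 p₁ q₁ z ≤
      T ^ (1 - max (q₀.toReal / q₁.toReal) (p₀.toReal / p₁.toReal)) *
        (elp2 p₀ q₀ z) ^ max (q₀.toReal / q₁.toReal) (p₀.toReal / p₁.toReal) := by
  set θ := max (q₀.toReal / q₁.toReal) (p₀.toReal / p₁.toReal) with hθdef
  have hp₀' : p₀ ≠ ∞ := ne_top_of_lt hp
  have hq₀' : q₀ ≠ ∞ := ne_top_of_lt hq
  have hp₀r : 0 < p₀.toReal := toReal_pos_of_lt_top hp₀ hp₀'
  have hq₀r : 0 < q₀.toReal := toReal_pos_of_lt_top hq₀ hq₀'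
  rcases eq_or_lt_of_le (theta_nonneg p₀ p₁ q₀ q₁) with hθ0 | hθpos
  · -- θ = 0 : both p₁ = q₁ = ∞
    have hqr : q₀.toReal / q₁.toReal = 0 :=
      le_antisymm (hθ0 ▸ le_max_left _ _) (by positivity)
    have hpr : p₀.toReal / p₁.toReal = 0 :=
      le_antisymm (hθ0 ▸ le_max_right _ _) (by positivity)
    have hq₁ : q₁ = ∞ := by
      by_contra h
      have : 0 < q₁.toReal := toReal_pos_of_lt_top (hq₀.trans hq) h
      have := div_pos hq₀r this
      rw [hqr] at this; exact lt_irrefl 0 this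
    have hp₁ : p₁ = ∞ := by
      by_contra h
      have : 0 < p₁.toReal := toReal_pos_of_lt_top (hp₀.trans hp) h
      have := div_pos hp₀r this
      rw [hpr] at this; exact lt_irrefl 0 this
    have hθz : θ = 0 := hθdef.trans hθ0.symm
    rw [hθz, ENNReal.rpow_zero, sub_zero, ENNReal.rpow_one, mul_one]
    rw [hq₁, hp₁, elp2, elpE, if_pos rfl]
    refine iSup_le fun j => ?_
    rw [elp, elpE, if_pos rfl]
    exact iSup_le fun k => hT j k
  · have hθ1 : θ ≤ 1 := theta_le_one hp₀ hp hq₀ hq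
    have hcondp : p₁ = ∞ ∨ p₀.toReal ≤ θ * p₁.toReal := by
      by_cases h : p₁ = ∞
      · exact Or.inl h
      · right
        have hp₁r : 0 < p₁.toReal := toReal_pos_of_lt_top (hp₀.trans hp) h
        have : p₀.toReal / p₁.toReal ≤ θ := le_max_right _ _
        calc p₀.toReal = (p₀.toReal / p₁.toReal) * p₁.toReal := by field_simp
          _ ≤ θ * p₁.toReal := by nlinarith
    have hcondq : q₁ = ∞ ∨ q₀.toReal ≤ θ * q₁.toReal := by
      by_cases h : q₁ = ∞
      · exact Or.inl h
      · right
        have hq₁r : 0 < q₁.toReal := toReal_pos_of_lt_top (hq₀.trans hq) h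
        have : q₀.toReal / q₁.toReal ≤ θ := le_max_left _ _
        calc q₀.toReal = (q₀.toReal / q₁.toReal) * q₁.toReal := by field_simp
          _ ≤ θ * q₁.toReal := by nlinarith
    calc elp2 p₁ q₁ z
        ≤ elpE q₁ (fun j => T ^ (1-θ) * (elp p₀ (z j)) ^ θ) := by
          refine elpE_mono fun j => ?_
          exact elpE_interp hp₀ hp₀' hθpos hθ1 hcondp (hT j)
      _ = T ^ (1-θ) * elpE q₁ (fun j => (elp p₀ (z j)) ^ θ) :=
          elpE_const_mul (hq₀.trans hq) _ _
      _ ≤ T ^ (1-θ) * (elpE q₀ (fun j => elp p₀ (z j))) ^ θ :=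
          mul_le_mul_right (elpE_rpow_le hq₀ hq₀' hθpos hθ1 hcondq _) _
      _ = _ := rfl

-- the ℓ^r bound (r = max toReal) : (∑' over pairs a^r)^(1/r) ≤ elp2 p₀ q₀ z
lemma sum_r_le (hp₀ : 0 < p₀) (hp₀' : p₀ ≠ ∞) (hq₀ : 0 < q₀) (hq₀' : q₀ ≠ ∞)
    (z : ℕ → ℕ → ℝ) :
    (∑' s : ℕ × ℕ, (‖z s.1 s.2‖₊ : ℝ≥0∞) ^ max p₀.toReal q₀.toReal) ^
        (1 / max p₀.toReal q₀.toReal) ≤ elp2 p₀ q₀ z := by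
  set r := max p₀.toReal q₀.toReal with hrdef
  have hp₀r : 0 < p₀.toReal := toReal_pos_of_lt_top hp₀ hp₀'
  have hq₀r : 0 < q₀.toReal := toReal_pos_of_lt_top hq₀ hq₀'
  have hr : 0 < r := lt_max_of_lt_left hp₀r
  have hinner : ∀ j, (∑' k, (‖z j k‖₊ : ℝ≥0∞) ^ r) ^ (1/r) ≤ elp p₀ (z j) := by
    intro j
    rw [elp, elpE, if_neg hp₀']
    exact rpow_tsum_mono hp₀r (le_max_left _ _) _
  have houter : (∑' j, (elp p₀ (z j)) ^ r) ^ (1/r) ≤ elp2 p₀ q₀ z := by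
    rw [elp2, elpE, if_neg hq₀']
    exact rpow_tsum_mono hq₀r (le_max_right _ _) _
  refine le_trans ?_ houter
  refine ENNReal.rpow_le_rpow ?_ (by positivity)
  rw [ENNReal.tsum_prod']
  refine ENNReal.tsum_le_tsum fun j => ?_
  have : ∑' k, (‖z j k‖₊ : ℝ≥0∞) ^ r
      = (((∑' k, (‖z j k‖₊ : ℝ≥0∞) ^ r) ^ (1/r)) ^ r) := by
    rw [← ENNReal.rpow_mul, one_div_mul_cancel hr.ne', ENNReal.rpow_one]
  rw [this]
  exact ENNReal.rpow_le_rpow (hinner j) hr.le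

-- B9 lower bound
lemma card_le_elp2 (hp₀ : 0 < p₀) (hp₀' : p₀ ≠ ∞) (hq₀ : 0 < q₀) (hq₀' : q₀ ≠ ∞)
    {z : ℕ → ℕ → ℝ} {T : ℝ≥0∞} {S : Finset (ℕ × ℕ)}
    (hS : ∀ s ∈ S, T ≤ (‖z s.1 s.2‖₊ : ℝ≥0∞)) :
    (S.card : ℝ≥0∞) ^ (1 / max p₀.toReal q₀.toReal) * T ≤ elp2 p₀ q₀ z := by
  set r := max p₀.toReal q₀.toReal with hrdef
  have hp₀r : 0 < p₀.toReal := toReal_pos_of_lt_top hp₀ hp₀'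
  have hr : 0 < r := lt_max_of_lt_left hp₀r
  refine le_trans ?_ (sum_r_le hp₀ hp₀' hq₀ hq₀' z)
  have h1 : (S.card : ℝ≥0∞) * T ^ r ≤ ∑' s : ℕ × ℕ, (‖z s.1 s.2‖₊ : ℝ≥0∞) ^ r := by
    refine le_trans ?_ (ENNReal.sum_le_tsum S)
    have : ∀ s ∈ S, T ^ r ≤ (‖z s.1 s.2‖₊ : ℝ≥0∞) ^ r := fun s hs =>
      ENNReal.rpow_le_rpow (hS s hs) hr.le
    calc (S.card : ℝ≥0∞) * T ^ r = ∑ _s ∈ S, T ^ r := by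
          rw [Finset.sum_const, nsmul_eq_mul]
      _ ≤ ∑ s ∈ S, (‖z s.1 s.2‖₊ : ℝ≥0∞) ^ r := Finset.sum_le_sum this
  calc (S.card : ℝ≥0∞) ^ (1/r) * T
      = ((S.card : ℝ≥0∞) * T ^ r) ^ (1/r) := by
        rw [ENNReal.mul_rpow_of_nonneg _ _ (by positivity), ← ENNReal.rpow_mul,
          mul_one_div_cancel hr.ne', ENNReal.rpow_one]
    _ ≤ _ := ENNReal.rpow_le_rpow h1 (by positivity)

-- positivity / elementwise bounds
lemma le_elp2 (hp₀ : 0 < p₀) (hq₀ : 0 < q₀) (z : ℕ → ℕ → ℝ) (j k : ℕ) :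
    (‖z j k‖₊ : ℝ≥0∞) ≤ elp2 p₀ q₀ z :=
  le_trans (le_elpE hp₀ _ k) (le_elpE hq₀ (fun j => elp p₀ (z j)) j)

-- superlevel sets finite
lemma superlevel_finite (hp₀ : 0 < p₀) (hp₀' : p₀ ≠ ∞) (hq₀ : 0 < q₀) (hq₀' : q₀ ≠ ∞)
    {z : ℕ → ℕ → ℝ} (hz : elp2 p₀ q₀ z ≠ ∞) {ε : ℝ} (hε : 0 < ε) :
    {s : ℕ × ℕ | ε ≤ |z s.1 s.2|}.Finite := by
  set r := max p₀.toReal q₀.toReal with hrdef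
  have hp₀r : 0 < p₀.toReal := toReal_pos_of_lt_top hp₀ hp₀'
  have hr : 0 < r := lt_max_of_lt_left hp₀r
  have hsum : ∑' s : ℕ × ℕ, (‖z s.1 s.2‖₊ : ℝ≥0∞) ^ r ≠ ∞ := by
    intro h
    have := sum_r_le hp₀ hp₀' hq₀ hq₀' z
    rw [h, ENNReal.top_rpow_of_pos (by positivity)] at this
    exact hz (top_le_iff.1 this)
  have hfin := ENNReal.finite_const_le_of_tsum_ne_top hsum
    (ε := (ENNReal.ofReal ε) ^ r)
    (by
      intro h
      rw [ENNReal.rpow_eq_zero_iff] at h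
      rcases h with ⟨h1, _⟩ | ⟨h1, _⟩
      · exact absurd h1 (by simp [hε, hε.le])
      · exact ENNReal.ofReal_ne_top h1)
  refine hfin.subset fun s hs => ?_
  simp only [mem_setOf_eq] at hs ⊢
  refine ENNReal.rpow_le_rpow ?_ hr.le
  rw [← enorm_eq_nnnorm, ← ofReal_norm, Real.norm_eq_abs]
  exact ENNReal.ofReal_le_ofReal hs

end C

section D

-- existence of a maximizing coordinate
lemma exists_max_abs {x : ℕ → ℕ → ℝ} (hx : x ≠ 0)
    (hfin : ∀ ε : ℝ, 0 < ε → {s : ℕ × ℕ | ε ≤ |x s.1 s.2|}.Finite) :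
    ∃ s₀ : ℕ × ℕ, 0 < |x s₀.1 s₀.2| ∧ ∀ s : ℕ × ℕ, |x s.1 s.2| ≤ |x s₀.1 s₀.2| := by
  have hjk : ∃ j k, x j k ≠ 0 := by
    by_contra h
    push_neg at h
    exact hx (funext fun j => funext fun k => h j k)
  obtain ⟨j, k, hjk⟩ := hjk
  have hε : 0 < |x j k| := abs_pos.2 hjk
  have hfin' : {s : ℕ × ℕ | |x j k| ≤ |x s.1 s.2|}.Finite := hfin _ hε
  have hne : {s : ℕ × ℕ | |x j k| ≤ |x s.1 s.2|}.Nonempty := ⟨(j, k), by simp⟩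
  obtain ⟨s₀, hs₀mem, hs₀max⟩ :=
    Set.exists_max_image {s : ℕ × ℕ | |x j k| ≤ |x s.1 s.2|}
      (fun s : ℕ × ℕ => |x s.1 s.2|) hfin' hne
  refine ⟨s₀, lt_of_lt_of_le hε hs₀mem, fun s => ?_⟩
  by_cases hs : s ∈ {s : ℕ × ℕ | |x j k| ≤ |x s.1 s.2|}
  · exact hs₀max s hs
  · simp only [mem_setOf_eq, not_le] at hs
    exact hs.le.trans (hs₀max (j, k) (by simp))

-- the flat vector lemma
lemma flat_vector (V : Submodule ℝ (ℕ → ℕ → ℝ)) (n : ℕ) (hn : 1 ≤ n)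
    (hrank : Module.finrank ℝ V = n)
    (hfin : ∀ x ∈ V, ∀ ε : ℝ, 0 < ε → {s : ℕ × ℕ | ε ≤ |x s.1 s.2|}.Finite) :
    ∃ x ∈ V, ∃ t : ℝ, 0 < t ∧ ∃ S : Finset (ℕ × ℕ), n ≤ S.card ∧
      (∀ s ∈ S, |x s.1 s.2| = t) ∧ (∀ s : ℕ × ℕ, |x s.1 s.2| ≤ t) := by
  classical
  -- the set of achievable cardinalities of full attain sets
  set C : Set ℕ := {m | ∃ x ∈ V, x ≠ 0 ∧ ∃ t : ℝ, 0 < t ∧ ∃ S : Finset (ℕ × ℕ),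
    S.card = m ∧ (∀ s ∈ S, |x s.1 s.2| = t) ∧ (∀ s : ℕ × ℕ, |x s.1 s.2| ≤ t) ∧
    (∀ s : ℕ × ℕ, s ∉ S → |x s.1 s.2| < t)} with hC
  -- a canonical member of C from any nonzero element
  have hmem : ∀ x ∈ V, x ≠ 0 → ∃ m ∈ C, ∃ t : ℝ, 0 < t ∧ ∃ S : Finset (ℕ × ℕ),
      S.Nonempty ∧ S.card = m ∧ (∀ s ∈ S, |x s.1 s.2| = t) ∧ (∀ s : ℕ × ℕ, |x s.1 s.2| ≤ t) ∧
      (∀ s : ℕ × ℕ, s ∉ S → |x s.1 s.2| < t) ∧ x ∈ V ∧ x ≠ 0 := by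
    intro x hxV hx0
    obtain ⟨s₀, ht0, hmax⟩ := exists_max_abs hx0 (hfin x hxV)
    set t := |x s₀.1 s₀.2| with htdef
    have hAfin : {s : ℕ × ℕ | t ≤ |x s.1 s.2|}.Finite := hfin x hxV t ht0
    set S : Finset (ℕ × ℕ) := hAfin.toFinset with hSdef
    have hSeq : ∀ s ∈ S, |x s.1 s.2| = t := by
      intro s hs
      rw [hSdef, Set.Finite.mem_toFinset] at hs
      exact le_antisymm (hmax s) hs
    have hSlt : ∀ s : ℕ × ℕ, s ∉ S → |x s.1 s.2| < t := by
      intro s hs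
      rw [hSdef, Set.Finite.mem_toFinset, mem_setOf_eq, not_le] at hs
      exact hs
    have hSne : S.Nonempty := ⟨s₀, by rw [hSdef, Set.Finite.mem_toFinset, mem_setOf_eq]⟩
    exact ⟨S.card, ⟨x, hxV, hx0, t, ht0, S, rfl, hSeq, hmax, hSlt⟩,
      t, ht0, S, hSne, rfl, hSeq, hmax, hSlt, hxV, hx0⟩
  -- C is nonempty
  have hVne : ∃ x ∈ V, x ≠ 0 := by
    by_contra h
    push_neg at h
    have : V = ⊥ := by
      rw [Submodule.eq_bot_iff]
      exact h
    rw [this, finrank_bot] at hrank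
    omega
  obtain ⟨x₀, hx₀V, hx₀0⟩ := hVne
  obtain ⟨m₀, hm₀C, _⟩ := hmem x₀ hx₀V hx₀0
  -- if some member of C is ≥ n we are done
  by_cases hbig : ∃ m ∈ C, n ≤ m
  · obtain ⟨m, hmC, hnm⟩ := hbig
    obtain ⟨x, hxV, _, t, ht, S, hcard, hSeq, hle, _⟩ := hmC
    exact ⟨x, hxV, t, ht, S, hcard ▸ hnm, hSeq, hle⟩
  exfalso
  push_neg at hbig
  -- C is bounded; take the maximum
  have hbdd : BddAbove C := ⟨n, fun m hm => (hbig m hm).le⟩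
  have hMC : sSup C ∈ C := Nat.sSup_mem ⟨m₀, hm₀C⟩ hbdd
  set M := sSup C with hMdef
  have hMlt : M < n := hbig M hMC
  obtain ⟨z, hzV, hz0, t, ht, S, hScard, hSeq, hSle, hSlt⟩ := hMC
  -- find y ∈ V, y ≠ 0, vanishing on S
  have hker : ∃ y ∈ V, y ≠ 0 ∧ ∀ s ∈ S, y s.1 s.2 = 0 := by
    set φ : V →ₗ[ℝ] (S → ℝ) :=
      { toFun := fun v s => v.1 s.1.1 s.1.2
        map_add' := fun v w => rfl
        map_smul' := fun c v => rfl } with hφ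
    have hni : ¬ Function.Injective φ := by
      intro hinj
      have h1 : Module.finrank ℝ V ≤ Module.finrank ℝ (S → ℝ) :=
        LinearMap.finrank_le_finrank_of_injective hinj
      rw [hrank, Module.finrank_fintype_fun_eq_card] at h1
      simp only [Fintype.card_coe, hScard] at h1
      omega
    rw [Function.not_injective_iff] at hni
    obtain ⟨v, w, hvw, hne⟩ := hni
    refine ⟨v.1 - w.1, sub_mem v.2 w.2, ?_, ?_⟩
    · intro h
      apply hne
      have : v.1 = w.1 := by
        have := sub_eq_zero.1 h
        exact this
      exact Subtype.ext this
    · intro s hs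
      have : φ v ⟨s, hs⟩ = φ w ⟨s, hs⟩ := by rw [hvw]
      simpa [hφ, sub_eq_zero] using this
  obtain ⟨y, hyV, hy0, hyS⟩ := hker
  -- a coordinate where y is nonzero; it is not in S
  have hs₀ : ∃ s₀ : ℕ × ℕ, y s₀.1 s₀.2 ≠ 0 := by
    by_contra h
    push_neg at h
    exact hy0 (funext fun j => funext fun k => h (j, k))
  obtain ⟨s₀, hys₀⟩ := hs₀
  have hs₀S : s₀ ∉ S := fun h => hys₀ (hyS s₀ h)
  have hys₀pos : 0 < |y s₀.1 s₀.2| := abs_pos.2 hys₀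
  -- δ : off-S bound for z
  have hδ : ∃ δ : ℝ, 0 ≤ δ ∧ δ < t ∧ ∀ s ∉ S, |z s.1 s.2| ≤ δ := by
    have hK : {s : ℕ × ℕ | t/2 ≤ |z s.1 s.2|}.Finite := hfin z hzV _ (by linarith)
    set D : Finset (ℕ × ℕ) := hK.toFinset \ S with hD
    by_cases hDne : D.Nonempty
    · obtain ⟨sm, hsmD, hsmax⟩ := D.exists_max_image (fun s => |z s.1 s.2|) hDne
      refine ⟨max (t/2) (|z sm.1 sm.2|), le_max_of_le_left (by linarith), ?_, ?_⟩
      · have : sm ∉ S := (Finset.mem_sdiff.1 hsmD).2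
        exact max_lt (by linarith) (hSlt sm this)
      · intro s hs
        by_cases hsK : s ∈ hK.toFinset
        · exact le_max_of_le_right (hsmax s (Finset.mem_sdiff.2 ⟨hsK, hs⟩))
        · rw [Set.Finite.mem_toFinset, mem_setOf_eq, not_le] at hsK
          exact le_max_of_le_left hsK.le
    · refine ⟨t/2, by linarith, by linarith, fun s hs => ?_⟩
      by_cases hsK : s ∈ hK.toFinset
      · exact absurd ⟨s, Finset.mem_sdiff.2 ⟨hsK, hs⟩⟩ hDne
      · rw [Set.Finite.mem_toFinset, mem_setOf_eq, not_le] at hsK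
        exact hsK.le
  obtain ⟨δ, hδ0, hδt, hδS⟩ := hδ
  -- the scale of the perturbation
  set ε₁ : ℝ := (t + δ) / |y s₀.1 s₀.2| with hε₁
  have hε₁pos : 0 < ε₁ := div_pos (by linarith) hys₀pos
  -- the finite window
  have hF₁ : {s : ℕ × ℕ | t/4 ≤ |z s.1 s.2|}.Finite := hfin z hzV _ (by linarith)
  have hF₂ : {s : ℕ × ℕ | t/(4*ε₁) ≤ |y s.1 s.2|}.Finite :=
    hfin y hyV _ (by positivity)
  set G : Finset (ℕ × ℕ) := (hF₁.toFinset ∪ hF₂.toFinset) \ S with hG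
  have hs₀G : s₀ ∈ G := by
    rw [hG, Finset.mem_sdiff, Finset.mem_union]
    refine ⟨Or.inr ?_, hs₀S⟩
    rw [Set.Finite.mem_toFinset, mem_setOf_eq, div_le_iff₀ (by positivity)]
    have h1 : ε₁ * |y s₀.1 s₀.2| = t + δ := by
      rw [hε₁]; exact div_mul_cancel₀ _ hys₀pos.ne'
    nlinarith
  have hGne : G.Nonempty := ⟨s₀, hs₀G⟩
  -- the sup function and IVT
  set g : ℝ → ℝ := fun ε => G.sup' hGne (fun s => |z s.1 s.2 + ε * y s.1 s.2|) with hg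
  have hgcont : Continuous g := by
    rw [continuous_iff_continuousAt]
    intro ε
    exact ContinuousAt.finset_sup'_apply hGne fun s _ => (by fun_prop : Continuous
      (fun ε : ℝ => |z s.1 s.2 + ε * y s.1 s.2|)).continuousAt
  have hg0 : g 0 ≤ δ := by
    refine Finset.sup'_le _ _ fun s hs => ?_
    have hsS : s ∉ S := (Finset.mem_sdiff.1 (hG ▸ hs)).2
    simpa using hδS s hsS
  have hgε₁ : t ≤ g ε₁ := by
    refine Finset.le_sup'_of_le _ hs₀G ?_
    have h1 : ε₁ * |y s₀.1 s₀.2| = t + δ := div_mul_cancel₀ _ hys₀pos.ne'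
    have h2 : |ε₁ * y s₀.1 s₀.2| = t + δ := by
      rw [abs_mul, abs_of_pos hε₁pos, h1]
    have h3 : |ε₁ * y s₀.1 s₀.2| ≤ |z s₀.1 s₀.2 + ε₁ * y s₀.1 s₀.2| + |z s₀.1 s₀.2| := by
      have := abs_add_le (z s₀.1 s₀.2 + ε₁ * y s₀.1 s₀.2) (-(z s₀.1 s₀.2))
      simpa [add_assoc] using this
    have h4 : |z s₀.1 s₀.2| ≤ δ := hδS s₀ hs₀S
    linarith
  obtain ⟨ε', hε'mem, hgε'⟩ : ∃ ε' ∈ Icc (0:ℝ) ε₁, g ε' = t := by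
    have := intermediate_value_Icc hε₁pos.le hgcont.continuousOn (a := 0) (b := ε₁)
    have ht_mem : t ∈ Icc (g 0) (g ε₁) := ⟨by linarith, hgε₁⟩
    obtain ⟨ε', h1, h2⟩ := this ht_mem
    exact ⟨ε', h1, h2⟩
  obtain ⟨hε'0, hε'ε₁⟩ := hε'mem
  -- the perturbed vector
  set w : ℕ → ℕ → ℝ := z + ε' • y with hw
  have hwV : w ∈ V := add_mem hzV (Submodule.smul_mem V ε' hyV)
  have hwval : ∀ s : ℕ × ℕ, w s.1 s.2 = z s.1 s.2 + ε' * y s.1 s.2 := fun s => rfl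
  -- w agrees with z on S
  have hwS : ∀ s ∈ S, |w s.1 s.2| = t := by
    intro s hs
    rw [hwval, hyS s hs, mul_zero, add_zero]
    exact hSeq s hs
  -- w is bounded by t everywhere
  have hwle : ∀ s : ℕ × ℕ, |w s.1 s.2| ≤ t := by
    intro s
    by_cases hsS : s ∈ S
    · exact (hwS s hsS).le
    by_cases hsG : s ∈ G
    · have h1 : |w s.1 s.2| ≤ g ε' := by
        rw [hwval]
        exact Finset.le_sup' (fun s : ℕ × ℕ => |z s.1 s.2 + ε' * y s.1 s.2|) hsG
      rw [hgε'] at h1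
      exact h1
    · -- outside S and G : both coordinates small
      have hsF : s ∉ hF₁.toFinset ∪ hF₂.toFinset := by
        intro h
        exact hsG (hG ▸ Finset.mem_sdiff.2 ⟨h, hsS⟩)
      rw [Finset.mem_union, not_or] at hsF
      obtain ⟨h1, h2⟩ := hsF
      rw [Set.Finite.mem_toFinset, mem_setOf_eq, not_le] at h1 h2
      have hy' : ε' * |y s.1 s.2| ≤ t/4 := by
        calc ε' * |y s.1 s.2| ≤ ε₁ * |y s.1 s.2| := by
              apply mul_le_mul_of_nonneg_right hε'ε₁ (abs_nonneg _)
          _ ≤ ε₁ * (t/(4*ε₁)) := by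
              apply mul_le_mul_of_nonneg_left h2.le hε₁pos.le
          _ = t/4 := by field_simp
      rw [hwval]
      calc |z s.1 s.2 + ε' * y s.1 s.2| ≤ |z s.1 s.2| + |ε' * y s.1 s.2| := abs_add_le _ _
        _ = |z s.1 s.2| + ε' * |y s.1 s.2| := by rw [abs_mul, abs_of_nonneg hε'0]
        _ ≤ t/4 + t/4 := by linarith
        _ ≤ t := by linarith
  -- w attains t at some point outside S
  obtain ⟨s', hs'G, hs'⟩ := Finset.exists_mem_eq_sup' hGne
    (fun s => |z s.1 s.2 + ε' * y s.1 s.2|)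
  have hs'eq : |w s'.1 s'.2| = t := by
    rw [hwval, ← hs']
    exact hgε'
  have hs'S : s' ∉ S := (Finset.mem_sdiff.1 (hG ▸ hs'G)).2
  -- w ≠ 0
  have hw0 : w ≠ 0 := by
    intro h
    rw [h] at hs'eq
    simp at hs'eq
    linarith
  -- the attain set of w gives a member of C bigger than M
  obtain ⟨m', hm'C, t', ht', S', hS'ne, hS'card, hS'eq, hS'le, hS'lt, _, _⟩ := hmem w hwV hw0
  -- t' = t
  have htt' : t' = t := by
    obtain ⟨s₁, hs₁⟩ := hS'ne
    have h1 : t' ≤ t := by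
      rw [← hS'eq s₁ hs₁]
      exact hwle s₁
    have h2 : t ≤ t' := by
      by_cases h : s' ∈ S'
      · rw [← hs'eq, hS'eq s' h]
      · have := hS'lt s' h
        rw [hs'eq] at this
        exact this.le
    linarith
  -- S ∪ {s'} ⊆ S'
  have hsub : insert s' S ⊆ S' := by
    intro s hs
    rcases Finset.mem_insert.1 hs with h | h
    · subst h
      by_contra hh
      have := hS'lt s hh
      rw [hs'eq, htt'] at this
      linarith
    · by_contra hh
      have := hS'lt s hh
      rw [hwS s h, htt'] at this
      linarith
  have hcard : M + 1 ≤ m' := by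
    have h1 : (insert s' S).card = M + 1 := by
      rw [Finset.card_insert_of_notMem hs'S, hScard]
    calc M + 1 = (insert s' S).card := h1.symm
      _ ≤ S'.card := Finset.card_le_card hsub
      _ = m' := hS'card
  have : m' ≤ M := le_csSup hbdd hm'C
  omega

end D

section E

-- homogeneity
lemma elp2_smul {p q : ℝ≥0∞} (hp : 0 < p) (hq : 0 < q) (c : ℝ) (x : ℕ → ℕ → ℝ) :
    elp2 p q (c • x) = (‖c‖₊ : ℝ≥0∞) * elp2 p q x := by
  have h1 : ∀ j, elp p ((c • x) j) = (‖c‖₊ : ℝ≥0∞) * elp p (x j) := by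
    intro j
    rw [elp, elp]
    have h2 : (fun k => (‖(c • x) j k‖₊ : ℝ≥0∞))
        = fun k => (‖c‖₊ : ℝ≥0∞) * (‖x j k‖₊ : ℝ≥0∞) := by
      funext k
      have : (c • x) j k = c * x j k := rfl
      rw [this, nnnorm_mul]
      push_cast
      ring
    rw [h2, elpE_const_mul hp]
  rw [elp2, elp2, show (fun j => elp p ((c • x) j)) = fun j => (‖c‖₊ : ℝ≥0∞) * elp p (x j)
    from funext h1, elpE_const_mul hq]

lemma min_one_div_max {a b : ℝ} (ha : 0 < a) (hb : 0 < b) :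
    min (1/a) (1/b) = 1 / max a b := by
  rcases le_total a b with h | h
  · rw [max_eq_right h, min_eq_right (one_div_le_one_div_of_le ha h)]
  · rw [max_eq_left h, min_eq_left (one_div_le_one_div_of_le hb h)]

-- the key single-n bound
set_option maxHeartbeats 1000000 in
lemma bern_le (p₀ p₁ q₀ q₁ : ℝ≥0∞)
    (hp₀ : 0 < p₀) (hp : p₀ < p₁) (hq₀ : 0 < q₀) (hq : q₀ < q₁)
    (n : ℕ) (hn : 1 ≤ n) :
    bern (elp2 p₀ q₀) (elp2 p₁ q₁) n ≤
      (n : ℝ≥0∞) ^ (-(min (1 / p₀.toReal) (1 / q₀.toReal) *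
        (1 - max (q₀.toReal / q₁.toReal) (p₀.toReal / p₁.toReal)))) := by
  set θ := max (q₀.toReal / q₁.toReal) (p₀.toReal / p₁.toReal) with hθdef
  set r := max p₀.toReal q₀.toReal with hrdef
  have hp₀' : p₀ ≠ ∞ := ne_top_of_lt hp
  have hq₀' : q₀ ≠ ∞ := ne_top_of_lt hq
  have hp₀r : 0 < p₀.toReal := toReal_pos_of_lt_top hp₀ hp₀'
  have hq₀r : 0 < q₀.toReal := toReal_pos_of_lt_top hq₀ hq₀'
  have hr : 0 < r := lt_max_of_lt_left hp₀r
  have hθ1 : θ ≤ 1 := theta_le_one hp₀ hp hq₀ hq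
  rw [bern]
  refine iSup_le ?_
  rintro ⟨V, hrankV, hfinV⟩
  have hfin' : ∀ x ∈ V, ∀ ε : ℝ, 0 < ε → {s : ℕ × ℕ | ε ≤ |x s.1 s.2|}.Finite :=
    fun x hx ε hε => superlevel_finite hp₀ hp₀' hq₀ hq₀' (hfinV x hx) hε
  obtain ⟨x, hxV, t, ht, S, hScard, hSeq, hSle⟩ := flat_vector V n hn hrankV hfin'
  obtain ⟨s₁, hs₁⟩ := Finset.card_pos.1 (lt_of_lt_of_le hn hScard)
  -- x ≠ 0 and its norm is positive and finite
  have hNZtop : elp2 p₀ q₀ x ≠ ∞ := hfinV x hxV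
  have hNZ0 : elp2 p₀ q₀ x ≠ 0 := by
    intro h
    have h1 := le_elp2 hp₀ hq₀ x s₁.1 s₁.2
    rw [h, le_zero_iff] at h1
    have : |x s₁.1 s₁.2| = t := hSeq s₁ hs₁
    simp only [ENNReal.coe_eq_zero, nnnorm_eq_zero] at h1
    rw [h1] at this
    simp at this
    linarith
  set ν : NNReal := (elp2 p₀ q₀ x).toNNReal with hν
  have hνeq : (ν : ℝ≥0∞) = elp2 p₀ q₀ x := ENNReal.coe_toNNReal hNZtop
  have hν0 : ν ≠ 0 := by
    intro h
    rw [h] at hνeq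
    exact hNZ0 hνeq.symm
  have hνpos : 0 < (ν : ℝ) := by positivity
  set c : ℝ := ((ν : ℝ))⁻¹ with hc
  have hcpos : 0 < c := by positivity
  set y : ℕ → ℕ → ℝ := c • x with hy
  have hyV : y ∈ V := Submodule.smul_mem V c hxV
  have hNy : elp2 p₀ q₀ y = 1 := by
    rw [hy, elp2_smul hp₀ hq₀, ← hνeq]
    have h2 : ‖c‖₊ = ν⁻¹ := by
      rw [hc, nnnorm_inv, NNReal.nnnorm_eq]
    rw [h2, ← ENNReal.coe_mul, inv_mul_cancel₀ hν0, ENNReal.coe_one]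
  -- the flat structure of y
  set tv : ℝ := c * t with htv
  have htvpos : 0 < tv := mul_pos hcpos ht
  set T : ℝ≥0∞ := (‖tv‖₊ : ℝ≥0∞) with hT
  have hyval : ∀ j k, y j k = c * x j k := fun j k => rfl
  have habs : ∀ j k, |y j k| = c * |x j k| := by
    intro j k
    rw [hyval, abs_mul, abs_of_pos hcpos]
  have hTle : ∀ j k, (‖y j k‖₊ : ℝ≥0∞) ≤ T := by
    intro j k
    rw [hT]
    refine ENNReal.coe_le_coe.2 ?_
    have h3 : ‖y j k‖ ≤ ‖tv‖ := by
      rw [Real.norm_eq_abs, Real.norm_eq_abs, habs, abs_of_pos htvpos, htv]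
      exact mul_le_mul_of_nonneg_left (hSle (j, k)) hcpos.le
    rwa [← coe_nnnorm (y j k), ← coe_nnnorm tv, NNReal.coe_le_coe] at h3
  have hST : ∀ s ∈ S, T ≤ (‖y s.1 s.2‖₊ : ℝ≥0∞) := by
    intro s hs
    rw [hT]
    refine ENNReal.coe_le_coe.2 ?_
    have h3 : ‖tv‖ ≤ ‖y s.1 s.2‖ := by
      rw [Real.norm_eq_abs, Real.norm_eq_abs, habs, abs_of_pos htvpos, htv, hSeq s hs]
    rwa [← coe_nnnorm (y s.1 s.2), ← coe_nnnorm tv, NNReal.coe_le_coe] at h3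
  -- the cardinality estimate
  have hcard : (n : ℝ≥0∞) ^ (1/r) * T ≤ 1 := by
    have h1 := card_le_elp2 hp₀ hp₀' hq₀ hq₀' hST
    rw [hNy] at h1
    refine le_trans (mul_le_mul_left ?_ T) h1
    exact ENNReal.rpow_le_rpow (by exact_mod_cast Nat.cast_le.2 hScard) (by positivity)
  have hTbound : T ≤ ((n : ℝ≥0∞) ^ (1/r))⁻¹ := by
    rw [ENNReal.le_inv_iff_mul_le, mul_comm]
    exact hcard
  -- the interpolation estimate
  have hMy : elp2 p₁ q₁ y ≤ T ^ (1 - θ) := by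
    have h1 := elp2_le_interp hp₀ hp hq₀ hq hTle
    rw [hNy, ENNReal.one_rpow, mul_one] at h1
    exact h1
  have hfinal : elp2 p₁ q₁ y ≤
      (n : ℝ≥0∞) ^ (-(min (1 / p₀.toReal) (1 / q₀.toReal) * (1 - θ))) := by
    refine le_trans hMy ?_
    calc T ^ (1 - θ) ≤ (((n : ℝ≥0∞) ^ (1/r))⁻¹) ^ (1 - θ) :=
          ENNReal.rpow_le_rpow hTbound (by linarith)
      _ = (((n : ℝ≥0∞) ^ (1/r)) ^ (1 - θ))⁻¹ := ENNReal.inv_rpow _ _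
      _ = ((n : ℝ≥0∞) ^ ((1/r) * (1 - θ)))⁻¹ := by rw [← ENNReal.rpow_mul]
      _ = (n : ℝ≥0∞) ^ (-((1/r) * (1 - θ))) := (ENNReal.rpow_neg _ _).symm
      _ = (n : ℝ≥0∞) ^ (-(min (1 / p₀.toReal) (1 / q₀.toReal) * (1 - θ))) := by
          rw [hrdef, ← min_one_div_max hp₀r hq₀r]
  exact iInf_le_of_le ⟨y, hyV, hNy⟩ hfinal

end E


theorem bernstein_elp2_le (p₀ p₁ q₀ q₁ : ℝ≥0∞)
    (hp₀ : 0 < p₀) (hp : p₀ < p₁) (hq₀ : 0 < q₀) (hq : q₀ < q₁) :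
    (∀ n : ℕ, 1 ≤ n →
      bern (elp2 p₀ q₀) (elp2 p₁ q₁) n ≤
        (n : ℝ≥0∞) ^ (-(min (1 / p₀.toReal) (1 / q₀.toReal) *
          (1 - max (q₀.toReal / q₁.toReal) (p₀.toReal / p₁.toReal))))) ∧
    Tendsto (bern (elp2 p₀ q₀) (elp2 p₁ q₁)) atTop (nhds 0) := by
  have hp₀' : p₀ ≠ ∞ := ne_top_of_lt hp
  have hq₀' : q₀ ≠ ∞ := ne_top_of_lt hq
  have hp₀r : 0 < p₀.toReal := toReal_pos_of_lt_top hp₀ hp₀'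
  have hq₀r : 0 < q₀.toReal := toReal_pos_of_lt_top hq₀ hq₀'
  refine ⟨fun n hn => bern_le p₀ p₁ q₀ q₁ hp₀ hp hq₀ hq n hn, ?_⟩
  set α : ℝ := min (1 / p₀.toReal) (1 / q₀.toReal) *
    (1 - max (q₀.toReal / q₁.toReal) (p₀.toReal / p₁.toReal)) with hα
  have hαpos : 0 < α := by
    refine mul_pos (lt_min (by positivity) (by positivity)) ?_
    have := theta_lt_one hp₀ hp hq₀ hq
    linarith
  have hto0 : Tendsto (fun n : ℕ => (n : ℝ≥0∞) ^ (-α)) atTop (nhds 0) := by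
    have h1 : Tendsto (fun n : ℕ => ((n : ℝ≥0∞))⁻¹) atTop (nhds 0) :=
      ENNReal.tendsto_inv_nat_nhds_zero
    have h2 : Tendsto (fun z : ℝ≥0∞ => z ^ α) (nhds 0) (nhds ((0 : ℝ≥0∞) ^ α)) :=
      ENNReal.continuous_rpow_const.tendsto 0
    rw [ENNReal.zero_rpow_of_pos hαpos] at h2
    have h3 := h2.comp h1
    refine h3.congr fun n => ?_
    simp only [Function.comp_apply]
    rw [ENNReal.inv_rpow, ← ENNReal.rpow_neg]
  refine tendsto_of_tendsto_of_tendsto_of_le_of_le' tendsto_const_nhds hto0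
    (Eventually.of_forall fun n => zero_le) ?_
  filter_upwards [eventually_ge_atTop 1] with n hn
  exact bern_le p₀ p₁ q₀ q₁ hp₀ hp hq₀ hq n hn
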